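/- Let 0 < ε ≤ 1, m > 0, T > 0. For h ∈ {−1, +1}, let M^h_{ε,m} be the 2×2 real matrix with rows (h − m − ε, m) and (m, −h − m − ε), and let M(ε,m,T) = exp(T·M^{−1}_{ε,m})·exp(T·M^{+1}_{ε,m}). Let σ(ε,m,T) be the spectral radius of M(ε,m,T), i.e. the maximum of the absolute values of its (real) eigenvalues. Then Δ(ε,m,T) = (1/T)·ln(σ(ε,m,T)). -/

import Mathlib

open Real Filter Set

/-- The `2T`-periodic square wave: `+1` on `[0,T)`, `-1` on `[T,2T)`. -/
noncomputable def squareWave (T t : ℝ) : ℝ :=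
  if Int.fract (t / (2 * T)) < 1 / 2 then 1 else -1

/-- A solution of the switched system `F(m,T)`: a continuous function satisfying
`dV/dt = 2(u(t) - m sinh V)` away from the switching times `nT`, `n ∈ ℤ`. -/
def IsSolF (m T : ℝ) (V : ℝ → ℝ) : Prop :=
  Continuous V ∧ ∀ t : ℝ, (∀ n : ℤ, t ≠ n * T) →
    HasDerivAt V (2 * (squareWave T t - m * Real.sinh (V t))) t

/-- The quantity `Δ(ε,m,T)` associated with the periodic solution `P` of `F(m,T)`. -/
noncomputable def DeltaP (ε m T : ℝ) (P : ℝ → ℝ) : ℝ :=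
  (1 / (2 * T)) * ∫ s in (0:ℝ)..(2 * T), 2 * (m * Real.cosh (P s) - m - ε)

/-- The matrix `M^h_{ε,m}` of the linear system `Σ^h(ε,m)`. -/
noncomputable def Mswitch (ε m h : ℝ) : Matrix (Fin 2) (Fin 2) ℝ :=
  !![h - m - ε, m; m, -h - m - ε]

/-- The period (monodromy) map `M(ε,m,T) = exp(T M⁻¹) exp(T M⁺¹)` of `Σ(ε,m,T)`. -/
noncomputable def monodromy (ε m T : ℝ) : Matrix (Fin 2) (Fin 2) ℝ :=
  NormedSpace.exp (T • Mswitch ε m (-1)) * NormedSpace.exp (T • Mswitch ε m 1)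

open scoped Matrix

section SpectralHelpers

attribute [local instance] Matrix.linftyOpNormedRing Matrix.linftyOpNormedAlgebra

noncomputable abbrev entryCLM (i j : Fin 2) : Matrix (Fin 2) (Fin 2) ℝ →L[ℝ] ℝ :=
  LinearMap.toContinuousLinearMap (Matrix.entryLinearMap ℝ ℝ i j)

lemma entry_hasDerivAt {f : ℝ → Matrix (Fin 2) (Fin 2) ℝ} {f' : Matrix (Fin 2) (Fin 2) ℝ} {t : ℝ}
    (h : HasDerivAt f f' t) (i j : Fin 2) :
    HasDerivAt (fun s => f s i j) (f' i j) t := by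
  have := ((entryCLM i j).hasFDerivAt (x := f t)).comp_hasDerivAt t h
  exact this

lemma eq_of_deriv_zero {f : ℝ → ℝ} {a b : ℝ} (hab : a < b)
    (hc : ContinuousOn f (Icc a b))
    (hd : ∀ t ∈ Ioo a b, HasDerivAt f 0 t) : f b = f a := by
  have key : ∀ x ∈ Ioo a b, f b = f x := by
    intro x hx
    have h1 : ContinuousOn f (Icc x b) := hc.mono (Icc_subset_Icc hx.1.le le_rfl)
    have h2 : ∀ y ∈ Ico x b, HasDerivWithinAt f 0 (Ici y) y := fun y hy =>
      (hd y ⟨lt_of_lt_of_le hx.1 hy.1, hy.2⟩).hasDerivWithinAt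
    exact constant_of_has_deriv_right_zero h1 h2 b ⟨hx.2.le, le_rfl⟩
  have hIoo : Ioo a b ∈ nhdsWithin a (Ioi a) := Ioo_mem_nhdsGT_of_mem ⟨le_rfl, hab⟩
  have h1 : Tendsto f (nhdsWithin a (Ioi a)) (nhds (f a)) :=
    ((hc a ⟨le_rfl, hab.le⟩).mono_left
      (nhdsWithin_le_of_mem (mem_of_superset hIoo Ioo_subset_Icc_self)))
  have h2 : Tendsto f (nhdsWithin a (Ioi a)) (nhds (f b)) := by
    refine Tendsto.congr' ?_ (tendsto_const_nhds (α := ℝ) (x := f b))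
    filter_upwards [hIoo] with x hx using key x hx
  exact tendsto_nhds_unique h2 h1

lemma flow_eq (A : Matrix (Fin 2) (Fin 2) ℝ) {a b : ℝ} (hab : a ≤ b)
    {x : ℝ → Fin 2 → ℝ}
    (hcont : ∀ i, Continuous (fun t => x t i))
    (hderiv : ∀ t ∈ Ioo a b, ∀ i, HasDerivAt (fun s => x s i) ((A *ᵥ x t) i) t) :
    x b = NormedSpace.exp ((b - a) • A) *ᵥ x a := by
  rcases eq_or_lt_of_le hab with rfl | hab
  · simp [NormedSpace.exp_zero]
  have hEd : ∀ t : ℝ, HasDerivAt (fun s => NormedSpace.exp ((a - s) • A))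
      (-(A * NormedSpace.exp ((a - t) • A))) t := by
    intro t
    have h1 : HasDerivAt (fun u : ℝ => NormedSpace.exp (u • A))
        (A * NormedSpace.exp ((a - t) • A)) (a - t) :=
      hasDerivAt_exp_smul_const' A (a - t)
    have h2 : HasDerivAt (fun s : ℝ => a - s) (-1) t := (hasDerivAt_id t).const_sub a
    have := h1.scomp t h2
    simp only [Function.comp_def, neg_smul, one_smul] at this
    exact this
  set E : ℝ → Matrix (Fin 2) (Fin 2) ℝ := fun s => NormedSpace.exp ((a - s) • A) with hE
  have hEcont : ∀ i j, Continuous (fun t => E t i j) := by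
    intro i j
    have : Continuous E := by
      rw [continuous_iff_continuousAt]; exact fun t => (hEd t).continuousAt
    have h2 := (entryCLM i j).continuous.comp this
    exact h2.congr (fun s => rfl)
  have key : ∀ i, (fun t => ∑ j, E t i j * x t j) b = (fun t => ∑ j, E t i j * x t j) a := by
    intro i
    apply eq_of_deriv_zero hab
    · exact Continuous.continuousOn (by
        exact continuous_finset_sum _ fun j _ => (hEcont i j).mul (hcont j))
    · intro t ht
      have hsum : HasDerivAt (fun s => ∑ j, E s i j * x s j)
          (∑ j, ((-(A * E t)) i j * x t j + E t i j * ((A *ᵥ x t) j))) t := by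
        apply HasDerivAt.fun_sum
        intro j _
        exact (entry_hasDerivAt (hEd t) i j).mul (hderiv t ht j)
      have hzero : (∑ j, ((-(A * E t)) i j * x t j + E t i j * ((A *ᵥ x t) j))) = 0 := by
        rw [Finset.sum_add_distrib]
        have e1 : ∑ j, (-(A * E t)) i j * x t j = -(((A * E t)) *ᵥ x t) i := by
          simp [Matrix.mulVec, dotProduct, Finset.sum_neg_distrib]
        have e2 : ∑ j, E t i j * ((A *ᵥ x t) j) = ((E t * A) *ᵥ x t) i := by
          rw [← Matrix.mulVec_mulVec]
          simp [Matrix.mulVec, dotProduct]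
        rw [e1, e2]
        have hcomm : A * E t = E t * A := by
          have : Commute ((a - t) • A) A := (Commute.refl A).smul_left _
          simpa [Commute, SemiconjBy, E] using (this.exp_left).symm
        rw [hcomm]; ring
      rw [← hzero]; exact hsum
  have hEa : E a = 1 := by simp [E, NormedSpace.exp_zero]
  have hkey : ∀ i, (E b *ᵥ x b) i = x a i := by
    intro i
    have := key i
    simpa [Matrix.mulVec, dotProduct, hEa, Matrix.one_apply, Finset.sum_ite_eq] using this
  have hEb : NormedSpace.exp ((b - a) • A) * E b = 1 := by
    show NormedSpace.exp ((b - a) • A) * NormedSpace.exp ((a - b) • A) = 1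
    rw [← Matrix.exp_add_of_commute ((b - a) • A) ((a - b) • A)
      (((Commute.refl A).smul_left _).smul_right _)]
    have : (b - a) • A + (a - b) • A = (0 : ℝ) • A := by module
    rw [this, zero_smul, NormedSpace.exp_zero]
  have : E b *ᵥ x b = x a := funext hkey
  calc x b = (1 : Matrix (Fin 2) (Fin 2) ℝ) *ᵥ x b := by simp
    _ = (NormedSpace.exp ((b - a) • A) * E b) *ᵥ x b := by rw [hEb]
    _ = NormedSpace.exp ((b - a) • A) *ᵥ (E b *ᵥ x b) := by rw [← Matrix.mulVec_mulVec]
    _ = NormedSpace.exp ((b - a) • A) *ᵥ x a := by rw [this]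

lemma exp_smul_one (c : ℝ) :
    NormedSpace.exp (c • (1 : Matrix (Fin 2) (Fin 2) ℝ)) = Real.exp c • 1 := by
  have h := NormedSpace.map_exp (algebraMap ℝ (Matrix (Fin 2) (Fin 2) ℝ))
    (continuous_algebraMap ℝ _) c
  rw [← Algebra.algebraMap_eq_smul_one]
  have h2 : algebraMap ℝ (Matrix (Fin 2) (Fin 2) ℝ) (NormedSpace.exp c) = Real.exp c • 1 := by
    rw [← Real.exp_eq_exp_ℝ, Algebra.algebraMap_eq_smul_one]
  exact h.symm.trans h2

lemma exp_eq_of_sq (A : Matrix (Fin 2) (Fin 2) ℝ) (ω : ℝ) (hω : 0 < ω)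
    (hA : A * A = (ω ^ 2) • (1 : Matrix (Fin 2) (Fin 2) ℝ)) (T : ℝ) (hT : 0 ≤ T) :
    NormedSpace.exp (T • A) =
      Real.cosh (ω * T) • (1 : Matrix (Fin 2) (Fin 2) ℝ) + (Real.sinh (ω * T) / ω) • A := by
  have hvec : ∀ v : Fin 2 → ℝ, NormedSpace.exp (T • A) *ᵥ v
      = Real.cosh (ω * T) • v + (Real.sinh (ω * T) / ω) • (A *ᵥ v) := by
    intro v
    set x : ℝ → Fin 2 → ℝ :=
      fun t => Real.cosh (ω * t) • v + (Real.sinh (ω * t) / ω) • (A *ᵥ v) with hx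
    have hAA : ∀ w : Fin 2 → ℝ, A *ᵥ (A *ᵥ w) = (ω ^ 2) • w := by
      intro w
      rw [Matrix.mulVec_mulVec, hA, Matrix.smul_mulVec, Matrix.one_mulVec]
    have hflow := flow_eq A hT (x := x) ?_ ?_
    · have h0 : x 0 = v := by simp [hx]; ext i; fin_cases i <;> rfl
      have hTT : x T = Real.cosh (ω * T) • v + (Real.sinh (ω * T) / ω) • (A *ᵥ v) := rfl
      rw [← hTT, hflow, h0, sub_zero]
    · intro i
      have : Continuous (fun t : ℝ => x t i) := by
        simp only [hx, Pi.add_apply, Pi.smul_apply, smul_eq_mul]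
        fun_prop
      exact this
    · intro t ht i
      have hd : HasDerivAt (fun s => x s i)
          ((ω * Real.sinh (ω * t)) * v i + (ω * Real.cosh (ω * t) / ω) * (A *ᵥ v) i) t := by
        simp only [hx, Pi.add_apply, Pi.smul_apply, smul_eq_mul]
        have h1 : HasDerivAt (fun s : ℝ => Real.cosh (ω * s)) (ω * Real.sinh (ω * t)) t := by
          have := (Real.hasDerivAt_cosh (ω * t)).comp t ((hasDerivAt_id t).const_mul ω)
          simpa [mul_comm, Function.comp_def] using this
        have h2 : HasDerivAt (fun s : ℝ => Real.sinh (ω * s) / ω) (ω * Real.cosh (ω * t) / ω) t := by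
          have := ((Real.hasDerivAt_sinh (ω * t)).comp t ((hasDerivAt_id t).const_mul ω)).div_const ω
          simpa [mul_comm, Function.comp_def] using this
        exact (h1.mul_const (v i)).add (h2.mul_const ((A *ᵥ v) i))
      convert hd using 1
      have : A *ᵥ x t = Real.cosh (ω * t) • (A *ᵥ v) + (Real.sinh (ω * t) / ω) • ((ω ^ 2) • v) := by
        simp only [hx, Matrix.mulVec_add, Matrix.mulVec_smul, hAA]
      rw [this]
      simp only [Pi.add_apply, Pi.smul_apply, smul_eq_mul]
      field_simp
      ring
  ext i j
  have := congrFun (hvec (Pi.single j 1)) i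
  simp only [Matrix.mulVec_single, Pi.smul_apply, Matrix.col_apply, op_smul_eq_mul, mul_one] at this
  rw [this]
  have hA1 : (A *ᵥ Pi.single j 1) i = A i j := by rw [Matrix.mulVec_single]; simp
  simp [Matrix.one_apply, hA1, Pi.single_apply]

lemma exp_Mswitch (ε m T h : ℝ) (hm : 0 < m) (hT : 0 < T) (hh : h ^ 2 = 1) :
    NormedSpace.exp (T • Mswitch ε m h) =
      Real.exp (-((m + ε) * T)) •
        (Real.cosh (Real.sqrt (1 + m ^ 2) * T) • (1 : Matrix (Fin 2) (Fin 2) ℝ) +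
          (Real.sinh (Real.sqrt (1 + m ^ 2) * T) / Real.sqrt (1 + m ^ 2)) • !![h, m; m, -h]) := by
  set ω := Real.sqrt (1 + m ^ 2) with hω
  have hω2 : ω ^ 2 = 1 + m ^ 2 := Real.sq_sqrt (by positivity)
  have hωpos : 0 < ω := Real.sqrt_pos.mpr (by positivity)
  set A : Matrix (Fin 2) (Fin 2) ℝ := !![h, m; m, -h] with hA
  have hAA : A * A = (ω ^ 2) • (1 : Matrix (Fin 2) (Fin 2) ℝ) := by
    ext i j
    fin_cases i <;> fin_cases j <;>
      simp [hA, Matrix.mul_apply, Fin.sum_univ_two, hω2, Matrix.one_apply] <;> ring_nf <;>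
      nlinarith [hh]
  have hsplit : T • Mswitch ε m h = (-((m + ε) * T)) • (1 : Matrix (Fin 2) (Fin 2) ℝ) + T • A := by
    ext i j
    fin_cases i <;> fin_cases j <;>
      simp [Mswitch, hA, Matrix.one_apply] <;> ring
  rw [hsplit, Matrix.exp_add_of_commute]
  · rw [exp_smul_one, exp_eq_of_sq A ω hωpos hAA T hT.le]
    rw [Matrix.smul_mul, Matrix.one_mul]
  · exact Commute.smul_left (Commute.one_left _) _ |>.smul_right _

lemma det_exp_Mswitch (ε m T h : ℝ) (hm : 0 < m) (hT : 0 < T) (hh : h ^ 2 = 1) :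
    (NormedSpace.exp (T • Mswitch ε m h)).det = Real.exp (-(2 * (m + ε) * T)) := by
  rw [exp_Mswitch ε m T h hm hT hh]
  set ω := Real.sqrt (1 + m ^ 2) with hω
  have hω2 : ω ^ 2 = 1 + m ^ 2 := Real.sq_sqrt (by positivity)
  have hωpos : 0 < ω := Real.sqrt_pos.mpr (by positivity)
  rw [Matrix.det_smul]
  have hmat : (Real.cosh (ω * T) • (1 : Matrix (Fin 2) (Fin 2) ℝ) +
      (Real.sinh (ω * T) / ω) • !![h, m; m, -h]) =
      !![Real.cosh (ω * T) + (Real.sinh (ω * T) / ω) * h, (Real.sinh (ω * T) / ω) * m;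
         (Real.sinh (ω * T) / ω) * m, Real.cosh (ω * T) - (Real.sinh (ω * T) / ω) * h] := by
    ext i j
    fin_cases i <;> fin_cases j <;> simp [Matrix.one_apply] <;> ring
  rw [hmat, Matrix.det_fin_two_of]
  have : Real.cosh (ω * T) ^ 2 - Real.sinh (ω * T) ^ 2 = 1 := Real.cosh_sq_sub_sinh_sq _
  have hexpand : (Real.cosh (ω * T) + Real.sinh (ω * T) / ω * h) *
        (Real.cosh (ω * T) - Real.sinh (ω * T) / ω * h) -
      Real.sinh (ω * T) / ω * m * (Real.sinh (ω * T) / ω * m) = 1 := by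
    have hωne : ω ≠ 0 := ne_of_gt hωpos
    field_simp
    nlinarith [this, hh, hω2]
  rw [hexpand]
  simp only [Fintype.card_fin, mul_one]
  rw [← Real.exp_nat_mul]
  ring_nf

lemma monodromy_det (ε m T : ℝ) (hm : 0 < m) (hT : 0 < T) :
    (monodromy ε m T).det = Real.exp (-(4 * (m + ε) * T)) := by
  rw [monodromy, Matrix.det_mul, det_exp_Mswitch ε m T (-1) hm hT (by ring),
    det_exp_Mswitch ε m T 1 hm hT (by ring), ← Real.exp_add]
  ring_nf

lemma squareWave_pos {T t : ℝ} (hT : 0 < T) (h1 : 0 ≤ t) (h2 : t < T) : squareWave T t = 1 := by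
  have hfr : Int.fract (t / (2 * T)) = t / (2 * T) :=
    Int.fract_eq_self.mpr ⟨by positivity, by rw [div_lt_one (by linarith)]; linarith⟩
  rw [squareWave, if_pos]
  rw [hfr, div_lt_iff₀ (by linarith)]
  linarith

lemma squareWave_neg {T t : ℝ} (hT : 0 < T) (h1 : T ≤ t) (h2 : t < 2 * T) : squareWave T t = -1 := by
  have hfr : Int.fract (t / (2 * T)) = t / (2 * T) :=
    Int.fract_eq_self.mpr ⟨div_nonneg (by linarith) (by linarith),
      by rw [div_lt_one (by linarith)]; linarith⟩
  rw [squareWave, if_neg]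
  rw [hfr, not_lt, le_div_iff₀ (by linarith)]
  linarith

lemma mem_spectrum_iff_det (M : Matrix (Fin 2) (Fin 2) ℝ) (z : ℝ) :
    z ∈ spectrum ℝ M ↔ (z • (1 : Matrix (Fin 2) (Fin 2) ℝ) - M).det = 0 := by
  rw [spectrum.mem_iff, Matrix.isUnit_iff_isUnit_det, isUnit_iff_ne_zero, not_ne_iff,
    Algebra.algebraMap_eq_smul_one]

lemma alg0 (m ε Rt pp h : ℝ) :
    Real.exp (Rt + pp / 2) * ((m * Real.cosh pp - m - ε) + (2 * (h - m * Real.sinh pp)) / 2)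
      = (h - m - ε) * Real.exp (Rt + pp / 2) + m * Real.exp (Rt - pp / 2) := by
  rw [Real.cosh_eq, Real.sinh_eq]
  have h1 : Rt - pp / 2 = (Rt + pp / 2) - pp := by ring
  rw [h1, Real.exp_sub, Real.exp_neg]
  field_simp
  ring

lemma alg1 (m ε Rt pp h : ℝ) :
    Real.exp (Rt - pp / 2) * ((m * Real.cosh pp - m - ε) - (2 * (h - m * Real.sinh pp)) / 2)
      = m * Real.exp (Rt + pp / 2) + (-h - m - ε) * Real.exp (Rt - pp / 2) := by
  rw [Real.cosh_eq, Real.sinh_eq]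
  have h1 : Rt + pp / 2 = (Rt - pp / 2) + pp := by ring
  rw [h1, Real.exp_add, Real.exp_neg]
  field_simp
  ring

end SpectralHelpers

theorem statement13 (ε m T : ℝ) (hε : 0 < ε) (hε1 : ε ≤ 1) (hm : 0 < m) (hT : 0 < T)
    (P : ℝ → ℝ) (hP : IsSolF m T P) (hPper : Function.Periodic P (2 * T)) :
    DeltaP ε m T P =
      (1 / T) * Real.log (sSup ((fun x : ℝ => |x|) '' spectrum ℝ (monodromy ε m T))) := by
  obtain ⟨hPc, hPd⟩ := hP
  set g : ℝ → ℝ := fun s => m * Real.cosh (P s) - m - ε with hg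
  have hgc : Continuous g := by fun_prop
  set R : ℝ → ℝ := fun t => ∫ s in (0:ℝ)..t, g s with hR
  have hRd : ∀ t : ℝ, HasDerivAt R (g t) t := fun t =>
    (hgc.integral_hasStrictDerivAt 0 t).hasDerivAt
  set x : ℝ → Fin 2 → ℝ :=
    fun t i => Real.exp (R t + (if i = 0 then P t / 2 else -(P t / 2))) with hx
  have hx0 : ∀ t, x t 0 = Real.exp (R t + P t / 2) := fun t => by simp [hx]
  have hx1 : ∀ t, x t 1 = Real.exp (R t - P t / 2) := fun t => by
    simp [hx, sub_eq_add_neg]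
  have hxc : ∀ i, Continuous fun t => x t i := by
    intro i
    have hRc : Continuous R := continuous_iff_continuousAt.mpr fun t => (hRd t).continuousAt
    fin_cases i
    · simp only [Fin.zero_eta, hx0]; fun_prop
    · simp only [Fin.mk_one, hx1]; fun_prop
  -- generic mulVec formulas
  have hmv : ∀ (h : ℝ) (t : ℝ),
      (Mswitch ε m h *ᵥ x t) 0 = (h - m - ε) * x t 0 + m * x t 1 ∧
      (Mswitch ε m h *ᵥ x t) 1 = m * x t 0 + (-h - m - ε) * x t 1 := by
    intro h t
    constructor <;>
      simp [Mswitch, Matrix.mulVec, dotProduct, Fin.sum_univ_two]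
  -- derivative of components, given P's ODE at t with squareWave value h
  have hDgen : ∀ (h t : ℝ), HasDerivAt P (2 * (h - m * Real.sinh (P t))) t →
      ∀ i, HasDerivAt (fun s => x s i) ((Mswitch ε m h *ᵥ x t) i) t := by
    intro h t hPt i
    have hd0 : HasDerivAt (fun s => Real.exp (R s + P s / 2))
        (Real.exp (R t + P t / 2) * (g t + (2 * (h - m * Real.sinh (P t))) / 2)) t :=
      ((hRd t).add (hPt.div_const 2)).exp
    have hd1 : HasDerivAt (fun s => Real.exp (R s - P s / 2))
        (Real.exp (R t - P t / 2) * (g t - (2 * (h - m * Real.sinh (P t))) / 2)) t :=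
      ((hRd t).sub (hPt.div_const 2)).exp
    fin_cases i
    · simp only [Fin.zero_eta, hx0]
      convert hd0 using 1
      rw [(hmv h t).1, hx0, hx1, hg]
      exact (alg0 m ε (R t) (P t) h).symm
    · simp only [Fin.mk_one, hx1]
      convert hd1 using 1
      rw [(hmv h t).2, hx0, hx1, hg]
      exact (alg1 m ε (R t) (P t) h).symm
  -- flow over [0, T]
  have hflow1 : x T = NormedSpace.exp (T • Mswitch ε m 1) *ᵥ x 0 := by
    have := flow_eq (Mswitch ε m 1) (a := 0) (b := T) hT.le hxc ?_
    · simpa using this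
    · intro t ht i
      have hne : ∀ n : ℤ, t ≠ n * T := by
        intro n hn
        have h0 : (0:ℝ) < (n:ℝ) * T := hn ▸ ht.1
        have h1 : (n:ℝ) * T < T := hn ▸ ht.2
        have hn0 : 0 < (n:ℝ) := by
          by_contra hc; push_neg at hc; nlinarith
        have hn1 : (1:ℝ) ≤ (n:ℝ) := by exact_mod_cast Int.cast_pos.mp hn0
        nlinarith
      have hPt := hPd t hne
      rw [squareWave_pos hT ht.1.le ht.2] at hPt
      exact hDgen 1 t hPt i
  -- flow over [T, 2T]
  have hflow2 : x (2 * T) = NormedSpace.exp (T • Mswitch ε m (-1)) *ᵥ x T := by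
    have := flow_eq (Mswitch ε m (-1)) (a := T) (b := 2 * T) (by linarith) hxc ?_
    · have h2T : 2 * T - T = T := by ring
      rwa [h2T] at this
    · intro t ht i
      have hne : ∀ n : ℤ, t ≠ n * T := by
        intro n hn
        have h0 : T < (n:ℝ) * T := hn ▸ ht.1
        have h1 : (n:ℝ) * T < 2 * T := hn ▸ ht.2
        have hn0 : 1 < (n:ℝ) := by
          by_contra hc; push_neg at hc; nlinarith
        have hn1 : (2:ℝ) ≤ (n:ℝ) := by
          have : (1:ℤ) < n := by exact_mod_cast hn0
          exact_mod_cast this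
        nlinarith
      have hPt := hPd t hne
      rw [squareWave_neg hT ht.1.le ht.2] at hPt
      have : (2 : ℝ) * (-1 - m * Real.sinh (P t)) = 2 * ((-1 : ℝ) - m * Real.sinh (P t)) := rfl
      exact hDgen (-1) t hPt i
  have hmono : x (2 * T) = monodromy ε m T *ᵥ x 0 := by
    rw [hflow2, hflow1, Matrix.mulVec_mulVec, monodromy]
  have hP2T : P (2 * T) = P 0 := by simpa using hPper 0
  have hR0 : R 0 = 0 := by simp [hR]
  set L : ℝ := Real.exp (R (2 * T)) with hL
  have hLpos : 0 < L := Real.exp_pos _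
  have hscale : x (2 * T) = L • x 0 := by
    funext i
    simp only [hx, Pi.smul_apply, smul_eq_mul, hP2T, hR0, zero_add, hL, ← Real.exp_add]
  have heig : monodromy ε m T *ᵥ x 0 = L • x 0 := by rw [← hmono, hscale]
  have hx0ne : x 0 ≠ 0 := by
    intro hcon
    have h00 : x 0 0 = 0 := by rw [hcon]; rfl
    rw [hx0] at h00
    exact Real.exp_ne_zero _ h00
  set Mo := monodromy ε m T with hMo
  have hdet : Mo.det = Real.exp (-(4 * (m + ε) * T)) := monodromy_det ε m T hm hT
  have hLmem : ((L • (1 : Matrix (Fin 2) (Fin 2) ℝ) - Mo)).det = 0 := by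
    rw [← Matrix.exists_mulVec_eq_zero_iff]
    refine ⟨x 0, hx0ne, ?_⟩
    rw [Matrix.sub_mulVec, Matrix.smul_mulVec, Matrix.one_mulVec, heig, sub_self]
  have hdetz : ∀ z : ℝ, (z • (1 : Matrix (Fin 2) (Fin 2) ℝ) - Mo).det
      = (z - Mo 0 0) * (z - Mo 1 1) - Mo 0 1 * Mo 1 0 := by
    intro z
    rw [Matrix.det_fin_two]
    simp only [Matrix.sub_apply, Matrix.smul_apply, Matrix.one_apply, smul_eq_mul]
    norm_num
  set mu : ℝ := Mo 0 0 + Mo 1 1 - L with hmu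
  have hLrel : (L - Mo 0 0) * (L - Mo 1 1) - Mo 0 1 * Mo 1 0 = 0 := by
    rw [← hdetz]; exact hLmem
  have hfact : ∀ z : ℝ, (z • (1 : Matrix (Fin 2) (Fin 2) ℝ) - Mo).det = (z - L) * (z - mu) := by
    intro z
    rw [hdetz, hmu]
    linear_combination hLrel
  have hspec : spectrum ℝ Mo = {L, mu} := by
    ext z
    rw [mem_spectrum_iff_det, hfact]
    simp [mul_eq_zero, sub_eq_zero, Set.mem_insert_iff]
  have hLmu : L * mu = Real.exp (-(4 * (m + ε) * T)) := by
    have h0 := hfact 0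
    rw [zero_smul, zero_sub, Matrix.det_neg] at h0
    rw [← hdet]
    have h2 : ((-1 : ℝ) ^ Fintype.card (Fin 2)) = 1 := by norm_num
    rw [h2, one_mul] at h0
    rw [h0]; ring
  have hRlb : -(2 * ε * T) ≤ R (2 * T) := by
    have hle : ∀ s ∈ Set.Icc (0:ℝ) (2 * T), (-ε : ℝ) ≤ g s := by
      intro s _
      rw [hg]
      simp only
      nlinarith [Real.one_le_cosh (P s)]
    have hc : (∫ _ in (0:ℝ)..(2 * T), (-ε : ℝ)) = -(2 * ε * T) := by
      simp; ring
    calc -(2 * ε * T) = ∫ _ in (0:ℝ)..(2 * T), (-ε : ℝ) := hc.symm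
      _ ≤ ∫ s in (0:ℝ)..(2 * T), g s :=
          intervalIntegral.integral_mono_on (by linarith) intervalIntegrable_const
            (hgc.intervalIntegrable 0 (2 * T)) hle
      _ = R (2 * T) := by rw [hR]
  have hmupos : 0 < mu := by
    have hpos : 0 < L * mu := by rw [hLmu]; exact Real.exp_pos _
    rcases mul_pos_iff.mp hpos with ⟨_, h2⟩ | ⟨h1, _⟩
    · exact h2
    · linarith
  have hmultL : mu < L := by
    have hlt : L * mu < L * L := by
      rw [hLmu, hL, ← Real.exp_add]
      apply Real.exp_lt_exp.mpr
      nlinarith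
    nlinarith
  have himg : (fun x : ℝ => |x|) '' spectrum ℝ Mo = {L, mu} := by
    rw [hspec, Set.image_pair, abs_of_pos hLpos, abs_of_pos hmupos]
  rw [himg, csSup_pair, max_eq_left hmultL.le, hL, Real.log_exp]
  have hint : (∫ s in (0:ℝ)..(2 * T), 2 * (m * Real.cosh (P s) - m - ε)) = 2 * R (2 * T) := by
    rw [hR, ← intervalIntegral.integral_const_mul]
  rw [DeltaP, hint]
  field_simp
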